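/- Let f : ℝ^d → ℝ be continuously differentiable with L-Lipschitz gradient for some L > 0, let R be a full-dimensional hyperrectangle in ℝ^d, let x ∈ R and let ε > 0. If every point y in the topological boundary ∂R is ε-unreachable from x, then R contains an ε-stationary point of f, i.e. a point z ∈ R with ‖∇f(z)‖ ≤ ε. -/

import Mathlib

open Metric Set Filter Topology

theorem stmt_11 (d : ℕ) (hd : 1 ≤ d)
    (f : EuclideanSpace ℝ (Fin d) → ℝ) (L : ℝ) (hL : 0 < L)
    (hf : ContDiff ℝ 1 f)
    (hlip : ∀ x y : EuclideanSpace ℝ (Fin d),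
      ‖gradient f x - gradient f y‖ ≤ L * ‖x - y‖)
    (a b : Fin d → ℝ) (hab : ∀ i, a i < b i)
    (R : Set (EuclideanSpace ℝ (Fin d)))
    (hR : R = {x : EuclideanSpace ℝ (Fin d) | ∀ i, x i ∈ Set.Icc (a i) (b i)})
    (x : EuclideanSpace ℝ (Fin d)) (hx : x ∈ R)
    (ε : ℝ) (hε : 0 < ε)
    (hunreach : ∀ y ∈ frontier R, f y > f x - ε * ‖x - y‖) :
    ∃ z ∈ R, ‖gradient f z‖ ≤ ε := by
  -- R is compact
  have hcomp : IsCompact R := by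
    have : R = (PiLp.continuousLinearEquiv 2 ℝ (fun _ : Fin d => ℝ)).toHomeomorph ⁻¹'
        (Set.univ.pi fun i => Set.Icc (a i) (b i)) := by
      rw [hR]; ext y
      simp [Set.mem_pi, Pi.le_def, forall_and]
    rw [this, Homeomorph.isCompact_preimage]
    exact isCompact_univ_pi fun i => isCompact_Icc
  have hclosed : IsClosed R := hcomp.isClosed
  -- the auxiliary function g
  set g : EuclideanSpace ℝ (Fin d) → ℝ := fun y => f y + ε * ‖x - y‖ with hg
  have hgcont : Continuous g := by
    exact (hf.continuous).add (continuous_const.mul ((continuous_const.sub continuous_id).norm))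
  -- minimize g over R
  obtain ⟨z, hzR, hzmin⟩ := hcomp.exists_isMinOn ⟨x, hx⟩ hgcont.continuousOn
  have hgx : g x = f x := by simp [hg]
  -- z is in the interior
  have hzint : z ∈ interior R := by
    by_contra hzi
    have hzfr : z ∈ frontier R := by
      rw [frontier, hclosed.closure_eq]; exact ⟨hzR, hzi⟩
    have h1 := hunreach z hzfr
    have h2 : g z ≤ g x := hzmin hx
    rw [hgx] at h2
    simp only [hg] at h2
    linarith
  obtain ⟨δ, hδ, hball⟩ : ∃ δ > 0, Metric.ball z δ ⊆ R := by
    obtain ⟨δ, hδ, hball⟩ := Metric.mem_nhds_iff.1 (mem_interior_iff_mem_nhds.1 hzint)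
    exact ⟨δ, hδ, hball⟩
  refine ⟨z, hzR, ?_⟩
  set v : EuclideanSpace ℝ (Fin d) := gradient f z with hv
  -- derivative of t ↦ f (z - t • v) at 0 is -‖v‖²
  have hdiff : DifferentiableAt ℝ f z := (hf.differentiable one_ne_zero) z
  have hgrad : HasFDerivAt f ((InnerProductSpace.toDual ℝ _) v) z :=
    hdiff.hasGradientAt.hasFDerivAt
  have hcurve : HasDerivAt (fun t : ℝ => z - t • v) (-v) 0 := by
    have : HasDerivAt (fun t : ℝ => t • v) v 0 := by
      simpa using (hasDerivAt_id (0:ℝ)).smul_const v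
    have h' : HasDerivAt (fun t : ℝ => z - t • v) (0 - v) 0 := (hasDerivAt_const (0:ℝ) z).sub this
    rw [zero_sub] at h'
    exact h'
  have hDφ : HasDerivAt (fun t : ℝ => f (z - t • v)) (-(‖v‖^2)) 0 := by
    have hgrad' : HasFDerivAt f ((InnerProductSpace.toDual ℝ _) v) (z - (0:ℝ) • v) := by
      simpa using hgrad
    have h1 : ((InnerProductSpace.toDual ℝ (EuclideanSpace ℝ (Fin d))) v) v = ‖v‖^2 := by
      rw [InnerProductSpace.toDual_apply_apply, real_inner_self_eq_norm_sq]
    have h2 := hgrad'.comp_hasDerivAt 0 hcurve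
    rw [map_neg, h1] at h2
    exact h2
  -- slope inequality on the right
  have hslope : ∀ᶠ t in 𝓝[>] (0:ℝ), -(ε * ‖v‖) ≤ slope (fun t : ℝ => f (z - t • v)) 0 t := by
    have hmem : Ioo (0:ℝ) (δ / (‖v‖ + 1)) ∈ 𝓝[>] (0:ℝ) :=
      Ioo_mem_nhdsGT_of_mem ⟨le_rfl, div_pos hδ (by positivity)⟩
    filter_upwards [hmem] with t ht
    have ht0 : 0 < t := ht.1
    have hzt : z - t • v ∈ R := by
      apply hball
      rw [Metric.mem_ball]
      have : dist (z - t • v) z = t * ‖v‖ := by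
        rw [dist_eq_norm]
        simp [norm_smul, abs_of_pos ht0]
      rw [this]
      calc t * ‖v‖ ≤ t * (‖v‖ + 1) := by nlinarith [norm_nonneg v]
        _ < δ := by
          have := ht.2
          rw [lt_div_iff₀ (by positivity)] at this
          linarith
    have h2 : g z ≤ g (z - t • v) := hzmin hzt
    have hnorm : ‖x - (z - t • v)‖ ≤ ‖x - z‖ + t * ‖v‖ := by
      calc ‖x - (z - t • v)‖ = ‖(x - z) + t • v‖ := by congr 1; abel
        _ ≤ ‖x - z‖ + ‖t • v‖ := norm_add_le _ _
        _ = ‖x - z‖ + t * ‖v‖ := by rw [norm_smul, Real.norm_of_nonneg ht0.le]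
    have key : f z - ε * (t * ‖v‖) ≤ f (z - t • v) := by
      simp only [hg] at h2
      nlinarith
    rw [slope_def_field]
    have hz0 : z - (0:ℝ) • v = z := by simp
    rw [hz0, sub_zero, le_div_iff₀ ht0]
    nlinarith
  have htend : Tendsto (slope (fun t : ℝ => f (z - t • v)) 0) (𝓝[>] (0:ℝ))
      (𝓝 (-(‖v‖^2))) := by
    have := hasDerivAt_iff_tendsto_slope.1 hDφ
    exact this.mono_left (nhdsWithin_mono 0 (fun t ht => ne_of_gt ht))
  have hfinal : -(ε * ‖v‖) ≤ -(‖v‖^2) := ge_of_tendsto htend hslope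
  by_contra hcon
  push_neg at hcon
  nlinarith [norm_nonneg v]
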